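/- arXiv:2603.28917 — 2 statements merged into one kernel-verified Lean document; each statement's English description precedes it below -/
import Mathlib

section
/- For positive definite X, Y, the S-divergence log det((X+Y)/2) − (1/2) log det(XY) is nonnegative, and equals zero if and only if X = Y. -/
open Matrix

private lemma scalar_key {a : ℝ} (ha : 0 < a) :
    (1 / 2 : ℝ) * Real.log a ≤ Real.log ((1 + a) / 2) ∧
      (Real.log ((1 + a) / 2) = (1 / 2 : ℝ) * Real.log a ↔ a = 1) := by
  have hs : 0 < Real.sqrt a := Real.sqrt_pos.mpr ha
  have hsq : Real.sqrt a * Real.sqrt a = a := Real.mul_self_sqrt ha.le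
  have hle : Real.sqrt a ≤ (1 + a) / 2 := by nlinarith [sq_nonneg (Real.sqrt a - 1)]
  have hlog : (1 / 2 : ℝ) * Real.log a = Real.log (Real.sqrt a) := by
    rw [Real.log_sqrt ha.le]; ring
  constructor
  · rw [hlog]; exact Real.log_le_log hs hle
  · constructor
    · intro h
      by_contra hne
      have h1 : Real.sqrt a ≠ 1 := fun hc => hne (by nlinarith)
      have hlt : Real.sqrt a < (1 + a) / 2 := by
        rcases lt_or_gt_of_ne h1 with h2 | h2 <;> nlinarith [sq_nonneg (Real.sqrt a - 1)]
      have := Real.log_lt_log hs hlt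
      rw [← hlog] at this; linarith [h]
    · rintro rfl; norm_num

private lemma posdef_conj {m : ℕ} {A B : Matrix (Fin m) (Fin m) ℝ} (hA : A.PosDef)
    (hB : IsUnit B.det) : (Bᵀ * A * B).PosDef := by
  have hAt : Aᵀ = A := by
    simpa [conjTranspose_eq_transpose_of_trivial] using hA.isHermitian.eq
  refine PosDef.of_dotProduct_mulVec_pos ?_ fun x hx => ?_
  · show (Bᵀ * A * B)ᴴ = Bᵀ * A * B
    simp [conjTranspose_eq_transpose_of_trivial, transpose_mul, hAt, Matrix.mul_assoc]
  · have hBx : B *ᵥ x ≠ 0 := by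
      intro hc
      apply hx
      have := congrArg (fun v => B⁻¹ *ᵥ v) hc
      simpa [Matrix.mulVec_mulVec, Matrix.nonsing_inv_mul B hB] using this
    have h2 := hA.dotProduct_mulVec_pos hBx
    have heq : star x ⬝ᵥ (Bᵀ * A * B) *ᵥ x = star (B *ᵥ x) ⬝ᵥ A *ᵥ (B *ᵥ x) := by
      rw [star_trivial, star_trivial, ← Matrix.mulVec_mulVec, ← Matrix.mulVec_mulVec,
        Matrix.dotProduct_mulVec, Matrix.vecMul_transpose]
    rw [heq]
    exact h2

/-- For positive definite `X, Y`, the S-divergence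
`log det((X+Y)/2) − (1/2) log det(XY)` is nonnegative, and vanishes iff `X = Y`. -/
theorem s_divergence_nonneg_eq_zero_iff (n : ℕ) (X Y : Matrix (Fin n) (Fin n) ℝ)
    (hX : X.PosDef) (hY : Y.PosDef) :
    0 ≤ Real.log ((1 / 2 : ℝ) • (X + Y)).det - (1 / 2 : ℝ) * Real.log (X * Y).det ∧
      (Real.log ((1 / 2 : ℝ) • (X + Y)).det - (1 / 2 : ℝ) * Real.log (X * Y).det = 0 ↔
        X = Y) := by
  classical
  obtain ⟨S, hSh, hSS⟩ : ∃ S : Matrix (Fin n) (Fin n) ℝ, S.IsHermitian ∧ S * S = X := by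
    open scoped MatrixOrder in
    exact ⟨CFC.sqrt X, (nonneg_iff_posSemidef.mp (CFC.sqrt_nonneg X)).1,
      CFC.sqrt_mul_sqrt_self X (nonneg_iff_posSemidef.mpr hX.posSemidef)⟩
  have hdetS : S.det * S.det = X.det := by rw [← det_mul, hSS]
  have hXdet : 0 < X.det := hX.det_pos
  have hSdetne : S.det ≠ 0 := by
    intro h; rw [h, mul_zero] at hdetS; exact hXdet.ne (hdetS)
  have hSunit : IsUnit S.det := isUnit_iff_ne_zero.mpr hSdetne
  have hSinv : S * S⁻¹ = 1 := mul_nonsing_inv S hSunit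
  have hinvS : S⁻¹ * S = 1 := nonsing_inv_mul S hSunit
  have hSinvh : S⁻¹.IsHermitian := hSh.inv
  have hSinvdet : IsUnit (S⁻¹).det := by
    rw [det_nonsing_inv]; exact isUnit_iff_ne_zero.mpr (by simp [Ring.inverse_eq_inv', hSdetne])
  set M : Matrix (Fin n) (Fin n) ℝ := S⁻¹ * Y * S⁻¹ with hMdef
  have hM : M.PosDef := by
    have h := posdef_conj hY hSinvdet
    have ht : (S⁻¹)ᵀ = S⁻¹ := by
      have := hSinvh.eq
      simpa [conjTranspose_eq_transpose_of_trivial] using this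
    rwa [ht] at h
  have hYM : Y = S * M * S := by
    rw [hMdef]
    symm
    calc S * (S⁻¹ * Y * S⁻¹) * S = S * (S⁻¹ * (Y * (S⁻¹ * S))) := by
          simp only [Matrix.mul_assoc]
      _ = Y := by rw [hinvS, Matrix.mul_one, ← Matrix.mul_assoc, hSinv, Matrix.one_mul]
  have hXY2 : (1 / 2 : ℝ) • (X + Y) = S * ((1 / 2 : ℝ) • (1 + M)) * S := by
    rw [Matrix.mul_smul, Matrix.smul_mul]
    congr 1
    rw [Matrix.mul_add, Matrix.add_mul, Matrix.mul_one, hSS, ← hYM]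
  -- determinants
  have hMh : M.IsHermitian := hM.isHermitian
  set lam : Fin n → ℝ := hMh.eigenvalues with hlam
  set U : Matrix (Fin n) (Fin n) ℝ := (hMh.eigenvectorUnitary : Matrix (Fin n) (Fin n) ℝ)
    with hUdef
  have hUU : U * star U = 1 := (Matrix.mem_unitaryGroup_iff).mp hMh.eigenvectorUnitary.2
  have hsUU : star U * U = 1 := (Matrix.mem_unitaryGroup_iff').mp hMh.eigenvectorUnitary.2
  have hspec : M = U * diagonal lam * star U := by
    have := hMh.spectral_theorem
    simpa using this
  have hdiagdet : ((1 / 2 : ℝ) • (1 + M)).det = ∏ i, (1 + lam i) / 2 := by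
    have e1 : U * (1 + diagonal lam) * star U = 1 + M := by
      rw [Matrix.mul_add, Matrix.add_mul, Matrix.mul_one, hUU, ← hspec]
    have e2 : (1 / 2 : ℝ) • (1 + diagonal lam) = diagonal (fun i => (1 + lam i) / 2) := by
      ext i j
      rcases eq_or_ne i j with rfl | hij
      · simp [Matrix.smul_apply, Matrix.add_apply, Matrix.one_apply_eq, diagonal_apply_eq]
        ring
      · simp [Matrix.smul_apply, Matrix.add_apply, Matrix.one_apply_ne hij,
          diagonal_apply_ne _ hij]
    have h1 : (1 / 2 : ℝ) • (1 + M) = U * diagonal (fun i => (1 + lam i) / 2) * star U := by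
      rw [← e2, Matrix.mul_smul, Matrix.smul_mul, e1]
    have hd : U.det * (star U).det = 1 := by rw [← det_mul, hUU, det_one]
    rw [h1, det_mul, det_mul, det_diagonal]
    linear_combination (∏ i : Fin n, (1 + lam i) / 2) * hd
  have hMdet : M.det = ∏ i, lam i := by
    have := hMh.det_eq_prod_eigenvalues
    simpa using this
  have hlampos : ∀ i, 0 < lam i := fun i => hM.eigenvalues_pos i
  have hYdet : Y.det = X.det * M.det := by
    rw [hYM, det_mul, det_mul, mul_comm, ← mul_assoc, hdetS]
  have hLHSdet : ((1 / 2 : ℝ) • (X + Y)).det = X.det * ((1 / 2 : ℝ) • (1 + M)).det := by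
    rw [hXY2, det_mul, det_mul, mul_comm, ← mul_assoc, hdetS]
  -- rewrite the expression as a sum
  have hkey : Real.log ((1 / 2 : ℝ) • (X + Y)).det - (1 / 2 : ℝ) * Real.log (X * Y).det
      = ∑ i, (Real.log ((1 + lam i) / 2) - (1 / 2 : ℝ) * Real.log (lam i)) := by
    have hfacne : ∀ i ∈ Finset.univ, (1 + lam i) / 2 ≠ 0 := by
      intro i _; have := hlampos i; positivity
    have hlamne : ∀ i ∈ Finset.univ, lam i ≠ 0 := fun i _ => (hlampos i).ne'
    have hMdetpos : 0 < M.det := hM.det_pos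
    rw [hLHSdet, hdiagdet, det_mul, hYdet, hMdet]
    have hprodne : (∏ i, (1 + lam i) / 2) ≠ 0 := Finset.prod_ne_zero_iff.mpr hfacne
    have hprodlamne : (∏ i, lam i) ≠ 0 := Finset.prod_ne_zero_iff.mpr hlamne
    rw [Real.log_mul hXdet.ne' hprodne,
      Real.log_mul hXdet.ne' (mul_ne_zero hXdet.ne' hprodlamne),
      Real.log_mul hXdet.ne' hprodlamne,
      Real.log_prod hfacne, Real.log_prod hlamne,
      Finset.sum_sub_distrib, ← Finset.mul_sum]
    ring
  have hterm : ∀ i ∈ Finset.univ, (0:ℝ) ≤ Real.log ((1 + lam i) / 2)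
      - (1 / 2 : ℝ) * Real.log (lam i) := by
    intro i _
    have := (scalar_key (hlampos i)).1
    linarith
  constructor
  · rw [hkey]
    exact Finset.sum_nonneg hterm
  · constructor
    · intro h
      rw [hkey] at h
      have hall := (Finset.sum_eq_zero_iff_of_nonneg hterm).mp h
      have hlam1 : ∀ i, lam i = 1 := by
        intro i
        have hi := hall i (Finset.mem_univ i)
        exact ((scalar_key (hlampos i)).2).mp (by linarith)
      have hMone : M = 1 := by
        rw [hspec]
        have : diagonal lam = 1 := by
          have hl : lam = 1 := funext fun i => hlam1 i
          rw [hl]; exact diagonal_one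
        rw [this, Matrix.mul_one, hUU]
      rw [hYM, hMone, Matrix.mul_one, hSS]
    · rintro rfl
      have h1 : (1 / 2 : ℝ) • (X + X) = X := by
        rw [smul_add]; module
      rw [h1, det_mul, Real.log_mul hXdet.ne' hXdet.ne']
      ring
end

section
/- The Legendre–Fenchel conjugate of ψ(X) = trace(X log X − X) over positive definite X is ψ*(Y) = trace(exp Y) for symmetric Y; i.e., sup over positive definite X of [trace(YX) − trace(X log X − X)] = trace(exp Y). -/
open Matrix

open NormedSpace

section Aux

variable {m : Type*} [Fintype m] [DecidableEq m]

omit [Fintype m] [DecidableEq m] in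
lemma aux_isHermitian_of_isSymm {A : Matrix m m ℝ} (h : A.IsSymm) : A.IsHermitian := by
  rw [Matrix.IsHermitian, conjTranspose_eq_transpose_of_trivial]; exact h

lemma aux_exp_spectral {A : Matrix m m ℝ} (hA : A.IsHermitian) :
    exp A = (hA.eigenvectorUnitary : Matrix m m ℝ) *
      diagonal (Real.exp ∘ hA.eigenvalues) * star (hA.eigenvectorUnitary : Matrix m m ℝ) := by
  set U := (hA.eigenvectorUnitary : Matrix m m ℝ) with hUdef
  have hmem : U * star U = 1 := mem_unitaryGroup_iff.mp hA.eigenvectorUnitary.2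
  have hU : IsUnit U := ⟨Unitary.toUnits hA.eigenvectorUnitary, rfl⟩
  have hUinv : U⁻¹ = star U := inv_eq_right_inv hmem
  conv_lhs => rw [hA.spectral_theorem, Unitary.conjStarAlgAut_apply]
  rw [← hUdef, ← hUinv, exp_conj U _ hU, exp_diagonal, hUinv]
  have hfun : ∀ v : m → ℝ, exp v = Real.exp ∘ v := by
    intro v; funext i; simp [Pi.coe_exp, ← Real.exp_eq_exp_ℝ]
  congr 2
  · funext i; simp [hfun]

lemma aux_posDef_conj {D B : Matrix m m ℝ} (hD : D.PosDef) (hB : IsUnit B) :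
    (Bᴴ * D * B).PosDef := by
  refine PosDef.of_dotProduct_mulVec_pos ?_ ?_
  · exact isHermitian_conjTranspose_mul_mul B hD.1
  · intro x hx
    have hBx : B *ᵥ x ≠ 0 := by
      intro h0
      apply hx
      have h1 : B⁻¹ *ᵥ (B *ᵥ x) = B⁻¹ *ᵥ 0 := by rw [h0]
      rwa [mulVec_mulVec, nonsing_inv_mul B ((Matrix.isUnit_iff_isUnit_det B).mp hB),
        one_mulVec, mulVec_zero] at h1
    simpa only [star_mulVec, dotProduct_mulVec, vecMul_vecMul] using hD.dotProduct_mulVec_pos hBx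

lemma aux_posDef_exp {A : Matrix m m ℝ} (hA : A.IsHermitian) : (exp A).PosDef := by
  rw [aux_exp_spectral hA]
  set U := (hA.eigenvectorUnitary : Matrix m m ℝ) with hUdef
  have hU : IsUnit (star U) := IsUnit.star ⟨Unitary.toUnits hA.eigenvectorUnitary, rfl⟩
  have hstar : U = (star U)ᴴ := by rw [← Matrix.star_eq_conjTranspose, star_star]
  rw [hstar]
  exact aux_posDef_conj (Matrix.PosDef.diagonal fun i => Real.exp_pos _) hU

lemma aux_trace_conj {V : Matrix m m ℝ} (M : Matrix m m ℝ) (hV : star V * V = 1) :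
    (V * M * star V).trace = M.trace := by
  rw [trace_mul_cycle, hV, one_mul]


lemma aux_sandwich_mul {V : Matrix m m ℝ} (X Y : Matrix m m ℝ) (hV : star V * V = 1) :
    (V * X * star V) * (V * Y * star V) = V * (X * Y) * star V := by
  simp only [mul_assoc]
  rw [← mul_assoc (star V) V, hV, one_mul]

lemma aux_trace_four (d e : m → ℝ) (P T : Matrix m m ℝ) :
    (diagonal d * (P * (diagonal e * T))).trace
      = ∑ i, ∑ j, d i * P i j * e j * T j i := by
  simp only [Matrix.trace, Matrix.diag_apply, Matrix.mul_apply, Matrix.diagonal_apply,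
    ite_mul, zero_mul, mul_ite, mul_zero, Finset.sum_ite_eq, Finset.mem_univ, if_true]
  refine Finset.sum_congr rfl fun i _ => ?_
  simp only [Finset.mul_sum]
  refine Finset.sum_congr rfl fun j _ => ?_
  ring

lemma aux_spectral_package {A : Matrix m m ℝ} (hA : A.IsHermitian) :
    ∃ (U : Matrix m m ℝ) (d : m → ℝ), star U * U = 1 ∧ U * star U = 1 ∧
      A = U * diagonal d * star U ∧ exp A = U * diagonal (Real.exp ∘ d) * star U := by
  refine ⟨_, hA.eigenvalues, mem_unitaryGroup_iff'.mp hA.eigenvectorUnitary.2,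
    mem_unitaryGroup_iff.mp hA.eigenvectorUnitary.2, ?_, aux_exp_spectral hA⟩
  have hco : (RCLike.ofReal ∘ hA.eigenvalues : m → ℝ) = hA.eigenvalues :=
    funext fun i => by simp [RCLike.ofReal_real_eq_id]
  have h := hA.spectral_theorem
  rwa [hco] at h

lemma aux_klein {A B : Matrix m m ℝ} (hA : A.IsHermitian) (hB : B.IsHermitian) :
    ((A - B) * exp B).trace + (exp B).trace ≤ (exp A).trace := by
  obtain ⟨U, d, hUU', hUU, hAeq, hexpA⟩ := aux_spectral_package hA
  obtain ⟨V, μ, hVV', hVV, hBeq, hexpB⟩ := aux_spectral_package hB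
  set M := star U * V with hMdef
  have hMM : M * star M = 1 := by
    rw [hMdef, Matrix.star_mul, star_star, mul_assoc, ← mul_assoc V, hVV, one_mul, hUU']
  have hMM' : star M * M = 1 := by
    rw [hMdef, Matrix.star_mul, star_star, mul_assoc, ← mul_assoc U, hUU, one_mul, hVV']
  have hrow : ∀ i, ∑ j, M i j * M i j = 1 := by
    intro i
    have h := congrArg (fun P : Matrix m m ℝ => P i i) hMM
    simpa [mul_apply, Matrix.star_apply, Matrix.one_apply] using h
  have hcol : ∀ j, ∑ i, M i j * M i j = 1 := by
    intro j
    have h := congrArg (fun P : Matrix m m ℝ => P j j) hMM'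
    simpa [mul_apply, Matrix.star_apply, Matrix.one_apply] using h
  have htrA : (exp A).trace = ∑ i, Real.exp (d i) := by
    rw [hexpA, aux_trace_conj _ hUU', trace_diagonal]
    simp [Function.comp]
  have htrB : (exp B).trace = ∑ j, Real.exp (μ j) := by
    rw [hexpB, aux_trace_conj _ hVV', trace_diagonal]
    simp [Function.comp]
  have htrBB : (B * exp B).trace = ∑ j, μ j * Real.exp (μ j) := by
    rw [hexpB, hBeq, aux_sandwich_mul _ _ hVV', diagonal_mul_diagonal,
      aux_trace_conj _ hVV', trace_diagonal]
    simp [Function.comp]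
  have hT : ∀ i j : m, (star V * U) j i = M i j := by
    intro i j
    have h : star V * U = star M := by rw [hMdef, Matrix.star_mul, star_star]
    rw [h, Matrix.star_apply, star_trivial]
  have htrAB : (A * exp B).trace = ∑ i, ∑ j, d i * M i j * Real.exp (μ j) * M i j := by
    rw [hexpB, hAeq]
    simp only [Matrix.mul_assoc]
    rw [trace_mul_comm]
    simp only [Matrix.mul_assoc]
    rw [← Matrix.mul_assoc (star U) V, aux_trace_four]
    refine Finset.sum_congr rfl fun i _ => Finset.sum_congr rfl fun j _ => ?_
    rw [hT i j, ← hMdef]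
    simp [Function.comp]
  have key : ∀ i j, M i j * M i j * ((d i - μ j + 1) * Real.exp (μ j))
      ≤ M i j * M i j * Real.exp (d i) := by
    intro i j
    refine mul_le_mul_of_nonneg_left ?_ (mul_self_nonneg _)
    have h1 := Real.add_one_le_exp (d i - μ j)
    calc (d i - μ j + 1) * Real.exp (μ j)
        ≤ Real.exp (d i - μ j) * Real.exp (μ j) :=
          mul_le_mul_of_nonneg_right h1 (Real.exp_pos _).le
      _ = Real.exp (d i) := by rw [← Real.exp_add]; ring_nf
  have e1 : ∑ i, ∑ j, M i j * M i j * (μ j * Real.exp (μ j)) = ∑ j, μ j * Real.exp (μ j) := by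
    rw [Finset.sum_comm]
    refine Finset.sum_congr rfl fun j _ => ?_
    rw [← Finset.sum_mul, hcol, one_mul]
  have e2 : ∑ i, ∑ j, M i j * M i j * Real.exp (μ j) = ∑ j, Real.exp (μ j) := by
    rw [Finset.sum_comm]
    refine Finset.sum_congr rfl fun j _ => ?_
    rw [← Finset.sum_mul, hcol, one_mul]
  have e3 : ∑ i, ∑ j, M i j * M i j * Real.exp (d i) = ∑ i, Real.exp (d i) := by
    refine Finset.sum_congr rfl fun i _ => ?_
    rw [← Finset.sum_mul, hrow, one_mul]
  rw [sub_mul, trace_sub, htrAB, htrBB, htrB, htrA, ← e1, ← e2, ← e3,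
    ← Finset.sum_sub_distrib, ← Finset.sum_add_distrib]
  refine Finset.sum_le_sum fun i _ => ?_
  rw [← Finset.sum_sub_distrib, ← Finset.sum_add_distrib]
  refine Finset.sum_le_sum fun j _ => ?_
  have hr : d i * M i j * Real.exp (μ j) * M i j - M i j * M i j * (μ j * Real.exp (μ j))
      + M i j * M i j * Real.exp (μ j)
      = M i j * M i j * ((d i - μ j + 1) * Real.exp (μ j)) := by ring
  rw [hr]
  exact key i j

end Aux

/-- The Legendre–Fenchel conjugate of `ψ(X) = trace(X log X − X)` over positive definite `X`
is `ψ*(Y) = trace(exp Y)` for symmetric `Y`: the supremum over positive definite `X` of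
`trace(YX) − trace(X log X − X)` equals `trace(exp Y)`.  Here `mlog` is the principal matrix
logarithm on the positive definite cone, characterized by symmetry and `exp (mlog X) = X`. -/
theorem conjugate_von_neumann_entropy (n : ℕ)
    (mlog : Matrix (Fin n) (Fin n) ℝ → Matrix (Fin n) (Fin n) ℝ)
    (hmlog : ∀ X : Matrix (Fin n) (Fin n) ℝ, X.PosDef →
      (mlog X).IsSymm ∧ NormedSpace.exp (mlog X) = X)
    (Y : Matrix (Fin n) (Fin n) ℝ) (hY : Y.IsSymm) :
    IsLUB {r : ℝ | ∃ X : Matrix (Fin n) (Fin n) ℝ, X.PosDef ∧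
        r = (Y * X).trace - (X * mlog X - X).trace}
      (NormedSpace.exp Y).trace := by
  have hYh : Y.IsHermitian := aux_isHermitian_of_isSymm hY
  constructor
  · rintro r ⟨X, hX, rfl⟩
    obtain ⟨hLs, hLe⟩ := hmlog X hX
    have hLh : (mlog X).IsHermitian := aux_isHermitian_of_isSymm hLs
    have key := aux_klein hYh hLh
    rw [hLe] at key
    have hrw : (Y * X).trace - (X * mlog X - X).trace
        = ((Y - mlog X) * X).trace + X.trace := by
      rw [sub_mul, trace_sub, trace_sub, trace_mul_comm X (mlog X)]
      ring
    rw [hrw]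
    exact key
  · intro b hb
    have hXpd : (exp Y).PosDef := aux_posDef_exp hYh
    obtain ⟨hLs, hLe⟩ := hmlog _ hXpd
    have hLh : (mlog (exp Y)).IsHermitian := aux_isHermitian_of_isSymm hLs
    have k1 := aux_klein hYh hLh
    have k2 := aux_klein hLh hYh
    rw [hLe] at k1 k2
    have hneg : ((mlog (exp Y) - Y) * exp Y).trace
        = -(((Y - mlog (exp Y)) * exp Y).trace) := by
      rw [← neg_sub Y, neg_mul, trace_neg]
    rw [hneg] at k2
    have ht : ((Y - mlog (exp Y)) * exp Y).trace = 0 := le_antisymm (by linarith) (by linarith)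
    rw [sub_mul, trace_sub] at ht
    apply hb
    refine ⟨exp Y, hXpd, ?_⟩
    rw [trace_sub, trace_mul_comm (exp Y) (mlog (exp Y))]
    linarith
end
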